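/- For every real μ > 0, the function t ↦ e^{−μ|t|} is positive definite on ℝ: for every n, every t : Fin n → ℝ and every c : Fin n → ℂ, the sum ∑_{i,j} conj(c i) · c j · e^{−μ|t i − t j|} is a nonnegative real number. -/

import Mathlib

open ComplexOrder

private lemma exp_integral_aux (μ : ℝ) (p q : ℝ) :
    ∫ x in p..q, 2 * μ * Real.exp (2 * μ * x) = Real.exp (2 * μ * q) - Real.exp (2 * μ * p) := by
  have hderiv : ∀ x ∈ Set.uIcc p q,
      HasDerivAt (fun y => Real.exp (2 * μ * y)) (2 * μ * Real.exp (2 * μ * x)) x := by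
    intro x _
    have h1 : HasDerivAt (fun y : ℝ => 2 * μ * y) (2 * μ) x := by
      simpa using (hasDerivAt_id x).const_mul (2 * μ)
    simpa [mul_comm] using h1.exp
  exact intervalIntegral.integral_eq_sub_of_hasDerivAt hderiv
    (Continuous.intervalIntegrable (by continuity) p q)

/-- Real positive semidefiniteness of the kernel. -/
private lemma real_psd (μ : ℝ) (hμ : 0 < μ) (n : ℕ) (t : Fin n → ℝ) (w : Fin n → ℝ) :
    0 ≤ ∑ i : Fin n, ∑ j : Fin n, w i * w j * Real.exp (-(μ * |t i - t j|)) := by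
  rcases Nat.eq_zero_or_pos n with hn | hn
  · subst hn; simp
  have hne : Nonempty (Fin n) := ⟨⟨0, hn⟩⟩
  obtain ⟨i₀, -, ha⟩ := Finset.exists_min_image Finset.univ t ⟨⟨0, hn⟩, Finset.mem_univ _⟩
  obtain ⟨i₁, -, hM⟩ := Finset.exists_max_image Finset.univ t ⟨⟨0, hn⟩, Finset.mem_univ _⟩
  set a := t i₀ with ha'
  set M := t i₁ with hM'
  have haM : a ≤ M := ha i₁ (Finset.mem_univ _)
  set v : Fin n → ℝ := fun i => w i * Real.exp (-(μ * t i)) with hv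
  set χ : Fin n → ℝ → ℝ := fun i x => if x ≤ t i then 1 else 0 with hχ
  set g : ℝ → ℝ := fun x => 2 * μ * Real.exp (2 * μ * x) with hg
  -- kernel factorization
  have key : ∀ i j, w i * w j * Real.exp (-(μ * |t i - t j|)) =
      v i * v j * Real.exp (2 * μ * min (t i) (t j)) := by
    intro i j
    have habs : |t i - t j| = t i + t j - 2 * min (t i) (t j) := by
      rcases le_total (t i) (t j) with h | h
      · rw [abs_of_nonpos (by linarith), min_eq_left h]; ring
      · rw [abs_of_nonneg (by linarith), min_eq_right h]; ring
    have hexp : -(μ * (t i + t j - 2 * min (t i) (t j))) =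
        -(μ * t i) + (-(μ * t j) + 2 * μ * min (t i) (t j)) := by ring
    simp only [hv]
    rw [habs, hexp, Real.exp_add, Real.exp_add]
    ring
  have hindic : ∀ i j, (fun x => v i * χ i x * (v j * χ j x) * g x) =
      Set.indicator {x | x ≤ min (t i) (t j)} (fun x => v i * v j * g x) := by
    intro i j
    funext x
    simp only [hχ, Set.indicator_apply, Set.mem_setOf_eq, le_min_iff]
    by_cases h1 : x ≤ t i <;> by_cases h2 : x ≤ t j <;> simp [h1, h2]
  -- the indicator integral identity
  have intid : ∀ i j, v i * v j * Real.exp (2 * μ * min (t i) (t j)) =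
      v i * v j * Real.exp (2 * μ * a) +
        ∫ x in a..M, v i * χ i x * (v j * χ j x) * g x := by
    intro i j
    have hmem : min (t i) (t j) ∈ Set.Icc a M :=
      ⟨le_min (ha i (Finset.mem_univ _)) (ha j (Finset.mem_univ _)),
        min_le_of_left_le (hM i (Finset.mem_univ _))⟩
    rw [hindic i j, intervalIntegral.integral_indicator hmem,
      intervalIntegral.integral_const_mul, hg, exp_integral_aux]
    ring
  have hint : ∀ (i j : Fin n), IntervalIntegrable
      (fun x => v i * χ i x * (v j * χ j x) * g x) MeasureTheory.volume a M := by
    intro i j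
    rw [hindic i j, intervalIntegrable_iff_integrableOn_Ioc_of_le haM]
    exact (Continuous.integrableOn_Ioc (by continuity)).indicator measurableSet_Iic
  calc ∑ i : Fin n, ∑ j : Fin n, w i * w j * Real.exp (-(μ * |t i - t j|))
      = ∑ i : Fin n, ∑ j : Fin n, (v i * v j * Real.exp (2 * μ * a) +
          ∫ x in a..M, v i * χ i x * (v j * χ j x) * g x) := by
        simp only [key, intid]
    _ = (∑ i : Fin n, ∑ j : Fin n, v i * v j * Real.exp (2 * μ * a)) +
        ∑ i : Fin n, ∑ j : Fin n, ∫ x in a..M, v i * χ i x * (v j * χ j x) * g x := by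
        simp only [Finset.sum_add_distrib]
    _ = (∑ i : Fin n, v i) * (∑ j : Fin n, v j) * Real.exp (2 * μ * a) +
        ∫ x in a..M, (∑ i : Fin n, v i * χ i x) * (∑ j : Fin n, v j * χ j x) * g x := by
        have hswap : ∑ i : Fin n, ∑ j : Fin n,
            (∫ x in a..M, v i * χ i x * (v j * χ j x) * g x) =
            ∫ x in a..M, ∑ i : Fin n, ∑ j : Fin n, v i * χ i x * (v j * χ j x) * g x := by
          rw [Finset.sum_congr rfl fun i _ =>
            (intervalIntegral.integral_finset_sum fun j _ => hint i j).symm]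
          refine (intervalIntegral.integral_finset_sum
            (f := fun i x => ∑ j : Fin n, v i * χ i x * (v j * χ j x) * g x)
            fun i _ => ?_).symm
          have := IntervalIntegrable.sum (μ := MeasureTheory.volume) (a := a) (b := M)
            Finset.univ (f := fun j x => v i * χ i x * (v j * χ j x) * g x)
            (fun j _ => hint i j)
          have h' : (fun x => ∑ j : Fin n, v i * χ i x * (v j * χ j x) * g x) =
              ∑ j : Fin n, fun x => v i * χ i x * (v j * χ j x) * g x := by
            funext x
            simp [Finset.sum_apply]
          rw [h']
          exact this
        rw [hswap]
        congr 1
        · rw [Finset.sum_mul_sum, Finset.sum_mul]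
          exact Finset.sum_congr rfl fun i _ => (Finset.sum_mul _ _ _).symm
        · refine intervalIntegral.integral_congr fun x _ => ?_
          rw [Finset.sum_mul_sum, Finset.sum_mul]
          exact Finset.sum_congr rfl fun i _ => (Finset.sum_mul _ _ _).symm
    _ ≥ 0 := by
        have h1 : 0 ≤ (∑ i : Fin n, v i) * (∑ j : Fin n, v j) * Real.exp (2 * μ * a) :=
          mul_nonneg (mul_self_nonneg _) (Real.exp_pos _).le
        have h2 : 0 ≤ ∫ x in a..M,
            (∑ i : Fin n, v i * χ i x) * (∑ j : Fin n, v j * χ j x) * g x := by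
          refine intervalIntegral.integral_nonneg haM fun x _ => ?_
          refine mul_nonneg (mul_self_nonneg _) ?_
          simp only [hg]
          positivity
        linarith

/-- Complex positive semidefiniteness from real positive semidefiniteness of a
symmetric real kernel. -/
private lemma complex_of_real_psd (n : ℕ) (r : Fin n → Fin n → ℝ)
    (hsymm : ∀ i j, r i j = r j i)
    (hpsd : ∀ w : Fin n → ℝ, 0 ≤ ∑ i : Fin n, ∑ j : Fin n, w i * w j * r i j)
    (c : Fin n → ℂ) :
    0 ≤ ∑ i : Fin n, ∑ j : Fin n, (starRingEnd ℂ) (c i) * c j * ((r i j : ℝ) : ℂ) := by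
  set u : Fin n → ℝ := fun i => (c i).re with hu
  set v : Fin n → ℝ := fun i => (c i).im with hv
  have expand : ∀ i j, (starRingEnd ℂ) (c i) * c j * ((r i j : ℝ) : ℂ) =
      (((u i * u j * r i j + v i * v j * r i j : ℝ)) : ℂ) +
        Complex.I * (((u i * v j * r i j - v i * u j * r i j : ℝ)) : ℂ) := by
    intro i j
    apply Complex.ext <;>
      simp [Complex.mul_re, Complex.mul_im, hu, hv] <;> ring
  have B0 : ∑ i : Fin n, ∑ j : Fin n,
      (u i * v j * r i j - v i * u j * r i j) = 0 := by
    have hneg : ∑ i : Fin n, ∑ j : Fin n, (u i * v j * r i j - v i * u j * r i j) =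
        -∑ i : Fin n, ∑ j : Fin n, (u i * v j * r i j - v i * u j * r i j) := by
      conv_lhs => rw [Finset.sum_comm]
      rw [← Finset.sum_neg_distrib]
      refine Finset.sum_congr rfl fun i _ => ?_
      rw [← Finset.sum_neg_distrib]
      refine Finset.sum_congr rfl fun j _ => ?_
      rw [hsymm j i]; ring
    linarith
  have key : ∑ i : Fin n, ∑ j : Fin n, (starRingEnd ℂ) (c i) * c j * ((r i j : ℝ) : ℂ) =
      ((∑ i : Fin n, ∑ j : Fin n, (u i * u j * r i j + v i * v j * r i j) : ℝ) : ℂ) := by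
    calc ∑ i : Fin n, ∑ j : Fin n, (starRingEnd ℂ) (c i) * c j * ((r i j : ℝ) : ℂ)
        = ∑ i : Fin n, ∑ j : Fin n,
            ((((u i * u j * r i j + v i * v j * r i j : ℝ)) : ℂ) +
              Complex.I * (((u i * v j * r i j - v i * u j * r i j : ℝ)) : ℂ)) := by
          simp only [expand]
      _ = (∑ i : Fin n, ∑ j : Fin n, (((u i * u j * r i j + v i * v j * r i j : ℝ)) : ℂ)) +
          ∑ i : Fin n, ∑ j : Fin n,
            Complex.I * (((u i * v j * r i j - v i * u j * r i j : ℝ)) : ℂ) := by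
          simp only [Finset.sum_add_distrib]
      _ = ((∑ i : Fin n, ∑ j : Fin n, (u i * u j * r i j + v i * v j * r i j) : ℝ) : ℂ) +
          Complex.I * ((∑ i : Fin n, ∑ j : Fin n,
            (u i * v j * r i j - v i * u j * r i j) : ℝ) : ℂ) := by
          congr 1
          · norm_cast
          · simp only [← Finset.mul_sum]
            norm_cast
      _ = ((∑ i : Fin n, ∑ j : Fin n, (u i * u j * r i j + v i * v j * r i j) : ℝ) : ℂ) := by
          rw [B0]; simp
  rw [key, Complex.zero_le_real]
  have hs : ∑ i : Fin n, ∑ j : Fin n, (u i * u j * r i j + v i * v j * r i j) =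
      (∑ i : Fin n, ∑ j : Fin n, u i * u j * r i j) +
        ∑ i : Fin n, ∑ j : Fin n, v i * v j * r i j := by
    simp only [Finset.sum_add_distrib]
  rw [hs]
  exact add_nonneg (hpsd u) (hpsd v)

/-- For every `μ > 0`, the function `t ↦ e^{−μ|t|}` is positive definite on `ℝ`:
every Hermitian form `∑_{i,j} conj(c i) · c j · e^{−μ|t i − t j|}` is a
nonnegative real number. -/
theorem exp_neg_abs_posdef (μ : ℝ) (hμ : 0 < μ) :
    ∀ (n : ℕ) (t : Fin n → ℝ) (c : Fin n → ℂ),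
      0 ≤ ∑ i : Fin n, ∑ j : Fin n,
        (starRingEnd ℂ) (c i) * c j * ((Real.exp (-(μ * |t i - t j|)) : ℝ) : ℂ) := by
  intro n t c
  exact complex_of_real_psd n (fun i j => Real.exp (-(μ * |t i - t j|)))
    (fun i j => by simp [abs_sub_comm (t i) (t j)])
    (fun w => real_psd μ hμ n t w) c
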